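/- Let E be a finite set of faults, each fault f equipped with a finite detector set D(f), let S = Δ_{f ∈ E} D(f) be the syndrome, and suppose f₀ ∈ E is peelable with respect to (E, S). Then for every g ∈ E with g ≠ f₀, g is peelable with respect to (E \ {f₀}, S Δ D(f₀)) if and only if g is peelable with respect to (E, S). In particular, peeling a peelable fault never changes the peelability status of any other active fault. -/
import Mathlib


open scoped symmDiff

instance symmDiffComm {X : Type*} [DecidableEq X] :
    Std.Commutative (fun A B : Finset X => A ∆ B) := ⟨symmDiff_comm⟩

instance symmDiffAssoc {X : Type*} [DecidableEq X] :
    Std.Associative (fun A B : Finset X => A ∆ B) := ⟨symmDiff_assoc⟩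

/-- The syndrome of a finite set `E` of faults, each fault `f` having detector
signature `D f`: the iterated symmetric difference `Δ_{f ∈ E} D f`. -/
def syndrome {F X : Type*} [DecidableEq X] (D : F → Finset X) (E : Finset F) :
    Finset X :=
  E.fold (fun A B : Finset X => A ∆ B) ∅ D

/-- A fault `f` is peelable with respect to active set `E` and syndrome `S` if its
complete detector signature is active (`D f ⊆ S`) and no other active fault shares
any of its detectors. -/
def Peelable {F X : Type*} [DecidableEq X] (D : F → Finset X) (E : Finset F)
    (S : Finset X) (f : F) : Prop :=
  D f ⊆ S ∧ ∀ g ∈ E, g ≠ f → D f ∩ D g = ∅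

/-- Cascade unblock rate `κ = 0`: if `f₀ ∈ E` is peelable with respect to
`(E, S)` where `S` is the syndrome of `E`, then peeling `f₀` (removing it from
`E` and updating the syndrome to `S ∆ D f₀`) leaves the peelability status of
every other active fault unchanged. -/
theorem peeling_preserves_peelability {F X : Type*} [DecidableEq F] [DecidableEq X]
    (D : F → Finset X) (E : Finset F) (S : Finset X) (hS : S = syndrome D E)
    (f₀ : F) (hf₀ : f₀ ∈ E) (hpeel : Peelable D E S f₀) :
    ∀ g ∈ E, g ≠ f₀ →
      (Peelable D (E.erase f₀) (S ∆ D f₀) g ↔ Peelable D E S g) := by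
  intro g hg hgf
  have hdis : D f₀ ∩ D g = ∅ := hpeel.2 g hg hgf
  have hx : ∀ x ∈ D g, x ∉ D f₀ := by
    intro x hx hx0
    have : x ∈ D f₀ ∩ D g := Finset.mem_inter.mpr ⟨hx0, hx⟩
    simp [hdis] at this
  have hsub : D g ⊆ S ∆ D f₀ ↔ D g ⊆ S := by
    constructor
    · intro h x hxg
      have := h hxg
      rw [Finset.mem_symmDiff] at this
      rcases this with ⟨h1, _⟩ | ⟨h1, _⟩
      · exact h1
      · exact absurd h1 (hx x hxg)
    · intro h x hxg
      rw [Finset.mem_symmDiff]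
      exact Or.inl ⟨h hxg, hx x hxg⟩
  constructor
  · rintro ⟨h1, h2⟩
    refine ⟨hsub.mp h1, ?_⟩
    intro h hh hhg
    by_cases hhf : h = f₀
    · subst hhf
      rw [Finset.inter_comm]
      exact hdis
    · exact h2 h (Finset.mem_erase.mpr ⟨hhf, hh⟩) hhg
  · rintro ⟨h1, h2⟩
    exact ⟨hsub.mpr h1, fun h hh hhg => h2 h (Finset.mem_of_mem_erase hh) hhg⟩
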